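/- arXiv:1311.6554 — 4 statements merged into one kernel-verified Lean document; each statement's English description precedes it below -/
import Mathlib

section
/- Every finite simple graph is an orbital network with d generators, where d is the maximal vertex degree: for every finite simple graph G on a vertex set V with maximal degree d, there exist maps T_1, …, T_d : V → V such that for all x, y ∈ V, x is adjacent to y in G if and only if x ≠ y and T_i(x) = y or T_i(y) = x for some i ∈ {1, …, d}. -/
/-- The orbital network generated by maps `T 0, …, T (d-1)` on `V`: distinct vertices
`x, y` are adjacent iff `T i x = y` or `T i y = x` for some `i`. -/
def orbitalNetwork {V : Type*} {d : ℕ} (T : Fin d → V → V) : SimpleGraph V where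
  Adj x y := x ≠ y ∧ ∃ i, T i x = y ∨ T i y = x
  symm := ⟨fun _ _ ⟨hxy, i, hi⟩ => ⟨hxy.symm, i, hi.symm⟩⟩
  loopless := ⟨fun _ ⟨hx, _⟩ => hx rfl⟩

/-- Every finite simple graph is an orbital network with `d` generators, where `d` is
the maximal vertex degree. -/
theorem every_graph_is_orbital {V : Type*} [Fintype V] [DecidableEq V]
    (G : SimpleGraph V) [DecidableRel G.Adj] :
    ∃ T : Fin G.maxDegree → V → V, G = orbitalNetwork T := by
  refine ⟨fun i x => (G.neighborFinset x).toList.getD i x, ?_⟩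
  have key : ∀ x y : V, G.Adj x y →
      ∃ i : Fin G.maxDegree, (G.neighborFinset x).toList.getD i x = y := by
    intro x y h
    have hy : y ∈ (G.neighborFinset x).toList := by
      rw [Finset.mem_toList, SimpleGraph.mem_neighborFinset]; exact h
    obtain ⟨j, hj, hget⟩ := List.getElem_of_mem hy
    have hlen : (G.neighborFinset x).toList.length = G.degree x := by
      rw [Finset.length_toList]; rfl
    have hjd : j < G.maxDegree :=
      lt_of_lt_of_le (hlen ▸ hj) (G.degree_le_maxDegree x)
    exact ⟨⟨j, hjd⟩, by rw [List.getD_eq_getElem _ _ hj]; exact hget⟩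
  have key2 : ∀ x y : V, x ≠ y →
      ∀ i : Fin G.maxDegree, (G.neighborFinset x).toList.getD i x = y → G.Adj x y := by
    intro x y hne i h
    by_cases hi : (i : ℕ) < (G.neighborFinset x).toList.length
    · have hmem : (G.neighborFinset x).toList.getD i x ∈ (G.neighborFinset x).toList := by
        rw [List.getD_eq_getElem _ _ hi]; exact List.getElem_mem hi
      rw [h, Finset.mem_toList, SimpleGraph.mem_neighborFinset] at hmem
      exact hmem
    · rw [List.getD_eq_default _ _ (not_lt.mp hi)] at h
      exact absurd h hne
  ext x y
  show G.Adj x y ↔ x ≠ y ∧ ∃ i, _ = y ∨ _ = x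
  constructor
  · intro h
    obtain ⟨i, hi⟩ := key x y h
    exact ⟨h.ne, i, Or.inl hi⟩
  · rintro ⟨hne, i, h | h⟩
    · exact key2 x y hne i h
    · exact (key2 y x hne.symm i h).symm
end

section
/- Let n be even but not divisible by 8, and let G be the orbital network on Z_n generated by finitely many maps T_i(x) = x^2 + c_i where every c_i ∈ Z_n is even. Then the subgraph of G induced on the even residues is isomorphic (as a simple graph) to the subgraph of G induced on the odd residues. -/
/-- For `n` even but not divisible by `8`, and quadratic maps `T i x = x² + cᵢ` with
all `cᵢ` even, the subgraph of the orbital network on `ℤ/nℤ` induced on the even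
residues is isomorphic to the subgraph induced on the odd residues. -/
theorem orbital_quadratic_even_components_isomorphic {n : ℕ} {d : ℕ} (hn : 2 ∣ n)
    (h8 : ¬ (8 ∣ n)) (c : Fin d → ZMod n)
    (hc : ∀ i, ZMod.castHom hn (ZMod 2) (c i) = 0) :
    Nonempty
      (((orbitalNetwork (fun i (x : ZMod n) => x ^ 2 + c i)).induce
          {x : ZMod n | ZMod.castHom hn (ZMod 2) x = 0}) ≃g
       ((orbitalNetwork (fun i (x : ZMod n) => x ^ 2 + c i)).induce
          {x : ZMod n | ZMod.castHom hn (ZMod 2) x = 1})) := by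
  have hn0 : n ≠ 0 := fun h => h8 (h ▸ dvd_zero 8)
  haveI : NeZero n := ⟨hn0⟩
  obtain ⟨u, k, huk, hcase⟩ : ∃ u k, u = 2 * k + 1 ∧ (n = 2 * u ∨ n = 4 * u) := by
    by_cases h4 : n % 4 = 0
    · exact ⟨n / 4, n / 4 / 2, by omega, Or.inr (by omega)⟩
    · exact ⟨n / 2, n / 2 / 2, by omega, Or.inl (by omega)⟩
  set e : ZMod n := (u : ZMod n) ^ 2 with he_def
  have hu1 : 1 ≤ u := by omega
  -- 4 * e = 0
  have he4 : 4 * e = 0 := by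
    have hd : n ∣ 4 * u ^ 2 := by
      rcases hcase with h | h
      · exact ⟨2 * u, by rw [h]; ring⟩
      · exact ⟨u, by rw [h]; ring⟩
    have := (ZMod.natCast_eq_zero_iff (4 * u ^ 2) n).mpr hd
    push_cast at this
    rw [he_def]; linear_combination this
  -- e * e = e
  have he2 : e * e = e := by
    have hd : n ∣ u ^ 4 - u ^ 2 := by
      rcases hcase with h | h
      · exact ⟨u * (2 * k ^ 2 + 2 * k), Nat.sub_eq_of_eq_add (by rw [h, huk]; ring)⟩
      · exact ⟨u * (k ^ 2 + k), Nat.sub_eq_of_eq_add (by rw [h, huk]; ring)⟩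
    have hmod : (u ^ 4 : ℕ) ≡ u ^ 2 [MOD n] :=
      ((Nat.modEq_iff_dvd' (Nat.pow_le_pow_right hu1 (by norm_num))).mpr hd).symm
    have := (ZMod.natCast_eq_natCast_iff _ _ _).mpr hmod
    push_cast at this
    rw [he_def]; linear_combination this
  -- e is odd
  have heOdd : ZMod.castHom hn (ZMod 2) e = 1 := by
    rw [he_def, map_pow, map_natCast, huk]
    push_cast
    rw [show (2 : ZMod 2) = 0 by decide]
    ring
  -- key algebraic identity
  have key : ∀ x : ZMod n, ZMod.castHom hn (ZMod 2) x = 0 → (x + e) ^ 2 = x ^ 2 + e := by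
    intro x hx
    have h1 : ((x.val : ℕ) : ZMod 2) = 0 := by
      rwa [ZMod.castHom_apply, ZMod.cast_eq_val] at hx
    obtain ⟨t, ht⟩ := (ZMod.natCast_eq_zero_iff _ _).mp h1
    have hx2 : x = 2 * (t : ZMod n) := by
      conv_lhs => rw [← ZMod.natCast_rightInverse (n := n) x, ht]
      push_cast; ring
    rw [hx2]
    linear_combination (t : ZMod n) * he4 + he2
  have keyAdj : ∀ x y : ZMod n, ZMod.castHom hn (ZMod 2) x = 0 → ∀ i : Fin d,
      ((x + e) ^ 2 + c i = y + e ↔ x ^ 2 + c i = y) := by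
    intro x y hx i
    rw [key x hx]
    constructor <;> intro h <;> linear_combination h
  set G := orbitalNetwork (fun i (x : ZMod n) => x ^ 2 + c i) with hG
  have hAdjIff : ∀ x y : ZMod n, ZMod.castHom hn (ZMod 2) x = 0 →
      ZMod.castHom hn (ZMod 2) y = 0 → (G.Adj (x + e) (y + e) ↔ G.Adj x y) := by
    intro x y hx hy
    show ((x + e ≠ y + e) ∧ ∃ i, (x + e) ^ 2 + c i = y + e ∨ (y + e) ^ 2 + c i = x + e) ↔
      ((x ≠ y) ∧ ∃ i, x ^ 2 + c i = y ∨ y ^ 2 + c i = x)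
    apply and_congr
    · exact not_congr ⟨fun h => by linear_combination h, fun h => by rw [h]⟩
    · exact exists_congr fun i => or_congr (keyAdj x y hx i) (keyAdj y x hy i)
  refine ⟨⟨⟨fun p => ⟨p.1 + e, ?_⟩, fun p => ⟨p.1 - e, ?_⟩, ?_, ?_⟩, ?_⟩⟩
  · have hp := p.2
    simp only [Set.mem_setOf_eq] at hp ⊢
    rw [map_add, hp, heOdd, zero_add]
  · have hp := p.2
    simp only [Set.mem_setOf_eq] at hp ⊢
    rw [map_sub, hp, heOdd, sub_self]
  · intro p; exact Subtype.ext (add_sub_cancel_right _ _)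
  · intro p; exact Subtype.ext (sub_add_cancel _ _)
  · intro a b
    have ha := a.2
    have hb := b.2
    simp only [Set.mem_setOf_eq] at ha hb
    exact hAdjIff a.1 b.1 ha hb
end

section
/- Let n be even and let G be the orbital network on Z_n generated by finitely many maps T_i(x) = x^2 + c_i where every c_i ∈ Z_n is odd. Then G contains no triangles, i.e. G is K_3-free (it has no clique on 3 vertices). -/
set_option linter.unnecessarySimpa false


/-- For `n` even and quadratic maps `T i x = x² + cᵢ` with all `cᵢ` odd, the orbital
network on `ℤ/nℤ` contains no triangles: it is `K₃`-free. -/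
theorem orbital_quadratic_odd_triangle_free {n : ℕ} {d : ℕ} (hn : 2 ∣ n)
    (c : Fin d → ZMod n) (hc : ∀ i, ZMod.castHom hn (ZMod 2) (c i) = 1) :
    (orbitalNetwork (fun i (x : ZMod n) => x ^ 2 + c i)).CliqueFree 3 := by
  set π := ZMod.castHom hn (ZMod 2) with hπ
  have key : ∀ x y : ZMod n,
      (orbitalNetwork (fun i (x : ZMod n) => x ^ 2 + c i)).Adj x y → π x ≠ π y := by
    intro x y ⟨hxy, i, hi⟩
    have step : ∀ a : ZMod n, π (a ^ 2 + c i) = π a + 1 := by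
      intro a
      have hsq : ∀ u : ZMod 2, u * u = u := by decide
      rw [map_add, map_pow, hc i, sq, hsq]
    rcases hi with h | h
    · rw [← h, step]
      intro hcon
      exact zero_ne_one (add_left_cancel (a := π x)
        (by simpa using hcon.symm) : (0 : ZMod 2) = 1)
    · rw [← h, step]
      intro hcon
      exact zero_ne_one (add_left_cancel (a := π y)
        (by simpa using hcon) : (0 : ZMod 2) = 1)
  intro s hs
  obtain ⟨a, b, cc, hab, hac, hbc, -⟩ := SimpleGraph.is3Clique_iff.mp hs
  have h1 := key a b hab
  have h2 := key b cc hbc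
  have h3 := key a cc hac
  generalize π a = u at h1 h3
  generalize π b = v at h1 h2
  generalize π cc = w at h2 h3
  fin_cases u <;> fin_cases v <;> fin_cases w <;> simp_all <;> contradiction
end

section
/- The Euler characteristic of the orbital network generated by a single map is nonnegative: if f is a map on a finite set R and G is the orbital network generated by f, then c_0 − c_1 + c_2 ≥ 0, where c_0 = |R| is the number of vertices of G, c_1 is the number of edges of G, and c_2 is the number of triangles of G. (In particular the number of edges of G is at most the number of vertices.) -/
/-- The orbital network generated by a single map `f` on `R`: distinct vertices
`x, y` are adjacent iff `f x = y` or `f y = x`. -/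
def orbitalNetwork₁ {R : Type*} (f : R → R) : SimpleGraph R where
  Adj x y := x ≠ y ∧ (f x = y ∨ f y = x)
  symm := ⟨fun _ _ ⟨hxy, hi⟩ => ⟨hxy.symm, hi.symm⟩⟩
  loopless := ⟨fun _ ⟨hx, _⟩ => hx rfl⟩

lemma orbital_edge_exists {R : Type*} (f : R → R) {e : Sym2 R}
    (he : e ∈ (orbitalNetwork₁ f).edgeSet) : ∃ x, x ∈ e ∧ f x ∈ e ∧ f x ≠ x := by
  induction e using Sym2.ind with
  | _ a b =>
    rw [SimpleGraph.mem_edgeSet] at he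
    obtain ⟨hne, h | h⟩ := he
    · exact ⟨a, Sym2.mem_mk_left a b, by rw [h]; exact Sym2.mem_mk_right a b,
        by rw [h]; exact hne.symm⟩
    · exact ⟨b, Sym2.mem_mk_right a b, by rw [h]; exact Sym2.mem_mk_left a b,
        by rw [h]; exact hne⟩

lemma orbital_edge_card_le {R : Type*} [Fintype R] (f : R → R) :
    (orbitalNetwork₁ f).edgeSet.ncard ≤ Fintype.card R := by
  classical
  set g : Sym2 R → R := fun e =>
    if h : ∃ x, x ∈ e ∧ f x ∈ e ∧ f x ≠ x then h.choose else e.out.1 with hg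
  have hspec : ∀ e ∈ (orbitalNetwork₁ f).edgeSet, e = s(g e, f (g e)) := by
    intro e he
    have h := orbital_edge_exists f he
    have := h.choose_spec
    have hge : g e = h.choose := by simp [hg, dif_pos h]
    rw [hge]
    exact ((Sym2.mem_and_mem_iff (fun hc => this.2.2 hc.symm)).mp
      ⟨this.1, this.2.1⟩)
  have hinj : Set.InjOn g (orbitalNetwork₁ f).edgeSet := by
    intro e1 h1 e2 h2 heq
    rw [hspec e1 h1, hspec e2 h2, heq]
  calc (orbitalNetwork₁ f).edgeSet.ncard ≤ (Set.univ : Set R).ncard :=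
        Set.ncard_le_ncard_of_injOn g (fun _ _ => Set.mem_univ _) hinj Set.finite_univ
    _ = Fintype.card R := by rw [Set.ncard_univ, Nat.card_eq_fintype_card]

/-- The Euler characteristic `c₀ - c₁ + c₂` of the orbital network generated by a
single map on a finite set is nonnegative, where `c₀` is the number of vertices,
`c₁` the number of edges and `c₂` the number of triangles; in particular the number
of edges is at most the number of vertices. -/
theorem orbital_single_map_euler_nonneg {R : Type*} [Fintype R] (f : R → R) :
    (0 : ℤ) ≤ (Fintype.card R : ℤ) - ((orbitalNetwork₁ f).edgeSet.ncard : ℤ) +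
        (({t : Finset R | (orbitalNetwork₁ f).IsNClique 3 t}).ncard : ℤ) ∧
    (orbitalNetwork₁ f).edgeSet.ncard ≤ Fintype.card R := by
  have h := orbital_edge_card_le f
  refine ⟨?_, h⟩
  have h' : ((orbitalNetwork₁ f).edgeSet.ncard : ℤ) ≤ (Fintype.card R : ℤ) := by
    exact_mod_cast h
  have h2 : (0 : ℤ) ≤ (({t : Finset R | (orbitalNetwork₁ f).IsNClique 3 t}).ncard : ℤ) :=
    Int.ofNat_nonneg _
  linarith
end
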